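/- Let (A, τ) be a simple commutative involutive algebra with A = A⁺ × A⁺ (τ the coordinate swap). Then up to isomorphism there is a unique simple ε-Hermitian A-module, and it is free of rank 1 over A. -/

import Mathlib

/-- `B` is an `ε`-Hermitian form on the `A`-module `E`, with respect to the involution
`τ` of `A`: it is biadditive, `A`-linear in the first variable, `(ε, τ)`-Hermitian
symmetric, and non-degenerate. -/
def IsHermForm (A : Type) [CommRing A] (τ : A → A) (ε : A)
    (E : Type) [AddCommGroup E] [Module A E] (B : E → E → A) : Prop :=
  (∀ u u' v, B (u + u') v = B u v + B u' v) ∧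
  (∀ u v v', B u (v + v') = B u v + B u v') ∧
  (∀ (a : A) (u v : E), B (a • u) v = a * B u v) ∧
  (∀ u v, B u v = ε * τ (B v u)) ∧
  (∀ u, (∀ v, B u v = 0) → u = 0)

/-- The `ε`-Hermitian `A`-module `(E, B)` is simple: it is nonzero and every
non-degenerate `A`-submodule is `⊥` or `⊤`. -/
def IsSimpleHerm (A : Type) [CommRing A] (τ : A → A) (ε : A)
    (E : Type) [AddCommGroup E] [Module A E] (B : E → E → A) : Prop :=
  Nontrivial E ∧
    ∀ N : Submodule A E, (∀ u ∈ N, (∀ v ∈ N, B u v = 0) → u = 0) → N = ⊥ ∨ N = ⊤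

/-- Let `(A, τ)` be the simple commutative involutive algebra `A = A⁺ × A⁺` with `τ` the
coordinate swap (`A⁺ = F` a field).  Then up to isomorphism there is a unique simple
`ε`-Hermitian `A`-module, and it is free of rank `1` over `A`. -/
lemma key_lemma {F : Type} [Field F] (ε : F × F) (hε : ε = 1 ∨ ε = -1)
    {E : Type} [AddCommGroup E] [Module (F × F) E]
    (B : E → E → F × F)
    (hB : IsHermForm (F × F) Prod.swap ε E B)
    (hS : IsSimpleHerm (F × F) Prod.swap ε E B) :
    ∃ w : E, (∀ x : E, ∃ a : F × F, a • w = x) ∧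
      (∀ a : F × F, a • w = 0 → a = 0) ∧
      (∀ a b : F × F, B (a • w) (b • w) = a * Prod.swap b * (1, ε.2)) := by
  obtain ⟨hadd1, hadd2, hsm, hherm, hnd⟩ := hB
  have hε2 : ε * ε = 1 := by rcases hε with h | h <;> subst h <;> norm_num
  have hε12 : ε.1 = ε.2 := by rcases hε with h | h <;> subst h <;> rfl
  have hε2ne : ε.2 ≠ 0 := by
    rcases hε with h | h <;> subst h <;> norm_num
  have hε1ne : ε.1 ≠ 0 := hε12 ▸ hε2ne
  -- semilinearity in the second slot
  have hsm2 : ∀ (a : F × F) (u v : E), B u (a • v) = Prod.swap a * B u v := by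
    intro a u v
    have h1 : Prod.swap (B v u) = ε * B u v := by
      rw [hherm u v, ← mul_assoc, hε2, one_mul]
    rw [hherm u (a • v), hsm a v u, Prod.swap_mul, h1]
    linear_combination Prod.swap a * B u v * hε2
  have hB0 : ∀ v, B 0 v = 0 := by
    intro v
    have h := hadd1 0 0 v
    rw [add_zero] at h
    exact left_eq_add.mp h
  set e₁ : F × F := (1, 0) with he₁
  set e₂ : F × F := (0, 1) with he₂
  have he12 : e₁ * e₂ = 0 := by simp [he₁, he₂, Prod.ext_iff]
  have hse1 : Prod.swap e₁ = e₂ := rfl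
  have hse2 : Prod.swap e₂ = e₁ := rfl
  have hsum : e₁ + e₂ = 1 := by simp [he₁, he₂, Prod.ext_iff]
  -- find the hyperbolic pair
  have : Nontrivial E := hS.1
  obtain ⟨w₀, hw₀⟩ := exists_ne (0 : E)
  obtain ⟨v', hv'⟩ : ∃ v', B w₀ v' ≠ 0 := by
    by_contra h
    push_neg at h
    exact hw₀ (hnd w₀ h)
  obtain ⟨u, v, hu, hv, huv⟩ :
      ∃ u v : E, e₂ • u = 0 ∧ e₁ • v = 0 ∧ B u v = (1, 0) := by
    set c : F × F := B w₀ v' with hc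
    by_cases hc1 : c.1 = 0
    · have hc2 : c.2 ≠ 0 := fun h => hv' (Prod.ext hc1 h)
      have hd : ε.1 * c.2 ≠ 0 := mul_ne_zero hε1ne hc2
      refine ⟨((ε.1 * c.2)⁻¹, (ε.1 * c.2)⁻¹) • (e₁ • v'), e₂ • w₀, ?_, ?_, ?_⟩
      · simp only [smul_smul]
        rw [show e₂ * (((ε.1 * c.2)⁻¹, (ε.1 * c.2)⁻¹) * e₁) = 0 by
          simp [he₁, he₂, Prod.ext_iff], zero_smul]
      · simp only [smul_smul]
        rw [show e₁ * e₂ = 0 from he12, zero_smul]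
      · rw [hsm, hsm, hsm2, hherm v' w₀, ← hc, hse2]
        refine Prod.ext ?_ ?_ <;>
          simp [he₁, he₂, Prod.ext_iff, hc1] <;> field_simp <;> ring
    · refine ⟨e₁ • w₀, (c.1⁻¹, c.1⁻¹) • (e₂ • v'), ?_, ?_, ?_⟩
      · simp only [smul_smul]
        rw [show e₂ * e₁ = 0 by rw [mul_comm]; exact he12, zero_smul]
      · simp only [smul_smul]
        rw [show e₁ * (((c.1⁻¹, c.1⁻¹) : F × F) * e₂) = 0 by
          simp [he₁, he₂, Prod.ext_iff], zero_smul]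
      · rw [hsm, hsm2, hsm2, hse2, ← hc]
        refine Prod.ext ?_ ?_ <;>
          simp [he₁, he₂, Prod.ext_iff] <;> field_simp <;> ring
  have hu0 : u ≠ 0 := by
    intro h
    rw [h, hB0] at huv
    exact one_ne_zero (congrArg Prod.fst huv).symm
  have hue : e₁ • u = u := by
    have h := congrArg (fun a : F × F => a • u) hsum
    simp only [add_smul, one_smul] at h
    rw [hu, add_zero] at h
    exact h
  have hve : e₂ • v = v := by
    have h := congrArg (fun a : F × F => a • v) hsum
    simp only [add_smul, one_smul] at h
    rw [hv, zero_add] at h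
    exact h
  have hBuu : B u u = 0 := by
    conv_lhs => rw [← hue]
    rw [hsm, hsm2, hse1, ← mul_assoc, he12, zero_mul]
  have hBvv : B v v = 0 := by
    conv_lhs => rw [← hve]
    rw [hsm, hsm2, hse2, ← mul_assoc, mul_comm e₂ e₁, he12, zero_mul]
  have hBvu : B v u = (0, ε.2) := by
    rw [hherm v u, huv]
    refine Prod.ext ?_ ?_ <;> simp
  -- the span of u and v is nondegenerate, hence everything
  set N : Submodule (F × F) E := Submodule.span (F × F) {u, v} with hN
  have huN : u ∈ N := Submodule.subset_span (Set.mem_insert _ _)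
  have hvN : v ∈ N := Submodule.subset_span (Set.mem_insert_of_mem _ rfl)
  have hsmu : ∀ p : F × F, p • u = (p.1, (0 : F)) • u := by
    intro p
    conv_lhs => rw [← hue, smul_smul]
    congr 1
    simp [he₁, Prod.ext_iff]
  have hsmv : ∀ p : F × F, p • v = ((0 : F), p.2) • v := by
    intro p
    conv_lhs => rw [← hve, smul_smul]
    congr 1
    simp [he₂, Prod.ext_iff]
  have hNnd : ∀ x ∈ N, (∀ y ∈ N, B x y = 0) → x = 0 := by
    intro x hx hxy
    obtain ⟨a, b, hab⟩ := Submodule.mem_span_pair.mp hx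
    have h1 := hxy v hvN
    have h2 := hxy u huN
    rw [← hab, hadd1, hsm, hsm, huv, hBvv, mul_zero, add_zero] at h1
    rw [← hab, hadd1, hsm, hsm, hBuu, hBvu, mul_zero, zero_add] at h2
    have ha1 : a.1 = 0 := by
      have := congrArg Prod.fst h1
      simpa using this
    have hb2 : b.2 = 0 := by
      have := congrArg Prod.snd h2
      simp at this
      rcases this with h | h
      · exact h
      · exact absurd h hε2ne
    rw [← hab, hsmu a, hsmv b, ha1, hb2]
    rw [show ((0 : F), (0 : F)) = (0 : F × F) from rfl]
    simp
  have hNtop : N = ⊤ := by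
    rcases hS.2 N hNnd with h | h
    · exact absurd (h ▸ huN) (by simpa using hu0)
    · exact h
  refine ⟨u + v, ?_, ?_, ?_⟩
  · intro x
    have hx : x ∈ N := hNtop ▸ Submodule.mem_top
    obtain ⟨a, b, hab⟩ := Submodule.mem_span_pair.mp hx
    refine ⟨(a.1, b.2), ?_⟩
    rw [smul_add, hsmu (a.1, b.2), hsmv (a.1, b.2), ← hsmu a, ← hsmv b, hab]
  · intro a ha
    have h1 : B (a • (u + v)) v = a * (1, 0) := by
      rw [hsm, hadd1, huv, hBvv, add_zero]
    have h2 : B (a • (u + v)) u = a * (0, ε.2) := by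
      rw [hsm, hadd1, hBuu, hBvu, zero_add]
    rw [ha, hB0] at h1 h2
    have ha1 : a.1 = 0 := by
      have := congrArg Prod.fst h1
      simpa using this.symm
    have ha2 : a.2 = 0 := by
      have h := congrArg Prod.snd h2
      simp at h
      rcases h with h | h
      · exact h
      · exact absurd h hε2ne
    exact Prod.ext ha1 ha2
  · intro a b
    have hBww : B (u + v) (u + v) = (1, ε.2) := by
      rw [hadd1, hadd2, hadd2, hBuu, hBvv, huv, hBvu, zero_add, add_zero]
      exact Prod.ext (by simp) (by simp)
    rw [hsm, hsm2, hBww, ← mul_assoc]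

theorem simple_hermitian_module_split_case (k F : Type) [Field k] [CharZero k]
    [Field F] [Algebra k F] [FiniteDimensional k F]
    (ε : F × F) (hε : ε = 1 ∨ ε = -1) :
    -- existence: there is a simple ε-Hermitian module over A = F × F
    (∃ B : (F × F) → (F × F) → (F × F),
        IsHermForm (F × F) Prod.swap ε (F × F) B ∧
        IsSimpleHerm (F × F) Prod.swap ε (F × F) B) ∧
    -- uniqueness: any two simple ε-Hermitian A-modules are isomorphic
    (∀ (E₁ : Type) [AddCommGroup E₁] [Module (F × F) E₁] [Module.Finite (F × F) E₁]
       (E₂ : Type) [AddCommGroup E₂] [Module (F × F) E₂] [Module.Finite (F × F) E₂]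
       (B₁ : E₁ → E₁ → F × F) (B₂ : E₂ → E₂ → F × F),
        IsHermForm (F × F) Prod.swap ε E₁ B₁ → IsSimpleHerm (F × F) Prod.swap ε E₁ B₁ →
        IsHermForm (F × F) Prod.swap ε E₂ B₂ → IsSimpleHerm (F × F) Prod.swap ε E₂ B₂ →
        ∃ φ : E₁ ≃ₗ[F × F] E₂, ∀ u v, B₂ (φ u) (φ v) = B₁ u v) ∧
    -- every simple ε-Hermitian A-module is free of rank 1 over A
    (∀ (E : Type) [AddCommGroup E] [Module (F × F) E] [Module.Finite (F × F) E]
       (B : E → E → F × F),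
        IsHermForm (F × F) Prod.swap ε E B → IsSimpleHerm (F × F) Prod.swap ε E B →
        Nonempty (Module.Basis (Fin 1) (F × F) E)) := by
  have hε1ne : ε.1 ≠ 0 := by rcases hε with h | h <;> subst h <;> norm_num
  refine ⟨?_, ?_, ?_⟩
  · -- existence
    refine ⟨fun a b => (1, ε.1) * a * Prod.swap b, ⟨?_, ?_, ?_, ?_, ?_⟩, ?_, ?_⟩
    · intro u u' v; ring
    · intro u v v'
      show (1, ε.1) * u * Prod.swap (v + v') =
        (1, ε.1) * u * Prod.swap v + (1, ε.1) * u * Prod.swap v'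
      have h : Prod.swap (v + v') = Prod.swap v + Prod.swap v' := rfl
      rw [h]; ring
    · intro a u v
      show (1, ε.1) * (a • u) * Prod.swap v = a * ((1, ε.1) * u * Prod.swap v)
      rw [smul_eq_mul]; ring
    · intro u v
      have h1 : Prod.swap ((1, ε.1) * v * Prod.swap u) =
          (ε.1, 1) * Prod.swap v * u := by
        rw [Prod.swap_mul, Prod.swap_mul, Prod.swap_swap, Prod.swap_prod_mk]
      have h2 : ((1 : F), ε.1) = ε * (ε.1, 1) := by
        rcases hε with h | h <;> subst h <;> refine Prod.ext ?_ ?_ <;> norm_num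
      show (1, ε.1) * u * Prod.swap v = ε * Prod.swap ((1, ε.1) * v * Prod.swap u)
      rw [h1, h2]; ring
    · intro u h
      have h1 := h ((0 : F), (1 : F))
      have h2 := h ((1 : F), (0 : F))
      simp [Prod.ext_iff, hε1ne] at h1 h2
      exact Prod.ext h1 h2
    · exact inferInstance
    · intro N hN
      by_cases hbot : N = ⊥
      · exact Or.inl hbot
      right
      obtain ⟨x, hxN, hx0⟩ := (Submodule.ne_bot_iff N).mp hbot
      suffices hone : (1 : F × F) ∈ N by
        rw [Submodule.eq_top_iff']
        intro y
        simpa using N.smul_mem y hone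
      by_cases hx1 : x.1 = 0
      · have hx2 : x.2 ≠ 0 := fun h => hx0 (Prod.ext hx1 h)
        have he2N : ((0 : F), (1 : F)) ∈ N := by
          have h := N.smul_mem ((0 : F), x.2⁻¹) hxN
          rwa [show ((0 : F), x.2⁻¹) • x = ((0 : F), (1 : F)) by
            refine Prod.ext ?_ ?_ <;> simp [smul_eq_mul, hx2]] at h
        by_cases hy : ∃ y ∈ N, y.1 ≠ 0
        · obtain ⟨y, hyN, hy1⟩ := hy
          have he1N : ((1 : F), (0 : F)) ∈ N := by
            have h := N.smul_mem ((y.1⁻¹ : F), (0 : F)) hyN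
            rwa [show ((y.1⁻¹ : F), (0 : F)) • y = ((1 : F), (0 : F)) by
              refine Prod.ext ?_ ?_ <;> simp [smul_eq_mul, hy1]] at h
          have h := N.add_mem he1N he2N
          rwa [show ((1 : F), (0 : F)) + ((0 : F), (1 : F)) = (1 : F × F) by
            refine Prod.ext ?_ ?_ <;> simp] at h
        · push_neg at hy
          exfalso
          have h0 := hN ((0 : F), (1 : F)) he2N (fun y hyN => by
            refine Prod.ext ?_ ?_ <;> simp [hy y hyN])
          simp [Prod.ext_iff] at h0
      · have he1N : ((1 : F), (0 : F)) ∈ N := by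
          have h := N.smul_mem ((x.1⁻¹ : F), (0 : F)) hxN
          rwa [show ((x.1⁻¹ : F), (0 : F)) • x = ((1 : F), (0 : F)) by
            refine Prod.ext ?_ ?_ <;> simp [smul_eq_mul, hx1]] at h
        by_cases hy : ∃ y ∈ N, y.2 ≠ 0
        · obtain ⟨y, hyN, hy2⟩ := hy
          have he2N : ((0 : F), (1 : F)) ∈ N := by
            have h := N.smul_mem ((0 : F), (y.2⁻¹ : F)) hyN
            rwa [show ((0 : F), (y.2⁻¹ : F)) • y = ((0 : F), (1 : F)) by
              refine Prod.ext ?_ ?_ <;> simp [smul_eq_mul, hy2]] at h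
          have h := N.add_mem he1N he2N
          rwa [show ((1 : F), (0 : F)) + ((0 : F), (1 : F)) = (1 : F × F) by
            refine Prod.ext ?_ ?_ <;> simp] at h
        · push_neg at hy
          exfalso
          have h0 := hN ((1 : F), (0 : F)) he1N (fun y hyN => by
            refine Prod.ext ?_ ?_ <;> simp [hy y hyN])
          simp [Prod.ext_iff] at h0
  · -- uniqueness
    intro E₁ _ _ _ E₂ _ _ _ B₁ B₂ hB₁ hS₁ hB₂ hS₂
    obtain ⟨w₁, hgen₁, hind₁, hmul₁⟩ := key_lemma ε hε B₁ hB₁ hS₁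
    obtain ⟨w₂, hgen₂, hind₂, hmul₂⟩ := key_lemma ε hε B₂ hB₂ hS₂
    have hbij₁ : Function.Bijective (LinearMap.toSpanSingleton (F × F) E₁ w₁) := by
      constructor
      · intro a b h
        simp only [LinearMap.toSpanSingleton_apply] at h
        exact sub_eq_zero.mp (hind₁ (a - b) (by rw [sub_smul, h, sub_self]))
      · intro x
        obtain ⟨a, ha⟩ := hgen₁ x
        exact ⟨a, by simpa [LinearMap.toSpanSingleton_apply] using ha⟩
    have hbij₂ : Function.Bijective (LinearMap.toSpanSingleton (F × F) E₂ w₂) := by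
      constructor
      · intro a b h
        simp only [LinearMap.toSpanSingleton_apply] at h
        exact sub_eq_zero.mp (hind₂ (a - b) (by rw [sub_smul, h, sub_self]))
      · intro x
        obtain ⟨a, ha⟩ := hgen₂ x
        exact ⟨a, by simpa [LinearMap.toSpanSingleton_apply] using ha⟩
    set g₁ := LinearEquiv.ofBijective _ hbij₁ with hg₁
    set g₂ := LinearEquiv.ofBijective _ hbij₂ with hg₂
    refine ⟨g₁.symm.trans g₂, fun u v => ?_⟩
    obtain ⟨a, ha⟩ := hgen₁ u
    obtain ⟨b, hb⟩ := hgen₁ v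
    have hφ : ∀ p : F × F, (g₁.symm.trans g₂) (p • w₁) = p • w₂ := by
      intro p
      have h1 : g₁ p = p • w₁ := by
        simp [hg₁, LinearEquiv.ofBijective_apply, LinearMap.toSpanSingleton_apply]
      have h2 : g₁.symm (p • w₁) = p := by rw [← h1, LinearEquiv.symm_apply_apply]
      rw [LinearEquiv.trans_apply, h2]
      simp [hg₂, LinearEquiv.ofBijective_apply, LinearMap.toSpanSingleton_apply]
    rw [← ha, ← hb, hφ, hφ, hmul₂, hmul₁]
  · -- free of rank 1
    intro E _ _ _ B hB hS
    obtain ⟨w, hgen, hind, _⟩ := key_lemma ε hε B hB hS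
    have hbij : Function.Bijective (LinearMap.toSpanSingleton (F × F) E w) := by
      constructor
      · intro a b h
        simp only [LinearMap.toSpanSingleton_apply] at h
        exact sub_eq_zero.mp (hind (a - b) (by rw [sub_smul, h, sub_self]))
      · intro x
        obtain ⟨a, ha⟩ := hgen x
        exact ⟨a, by simpa [LinearMap.toSpanSingleton_apply] using ha⟩
    exact ⟨(Module.Basis.singleton (Fin 1) (F × F)).map (LinearEquiv.ofBijective _ hbij)⟩
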